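/- Let $K \ge 1$, $R_c \ge 0$, and $R_{p,1} \le \cdots \le R_{p,K}$ be reals. Define, for $1 \le k' \le K$, $\eta(k') = (R_c + \sum_{j=1}^{k'} R_{p,j})/k'$. Let $k^\star$ be the largest $k' \le K$ such that $\eta(k') \ge R_{p,j}$ for all $j \le k'$ (equivalently $\eta(k') \ge R_{p,k'}$). Then the allocation $C_j = \eta(k^\star) - R_{p,j}$ for $j \le k^\star$ and $C_j = 0$ for $j > k^\star$ is feasible (nonnegative, sums to $R_c$) and achieves the maximum of $\min_k (C_k + R_{p,k})$ over all feasible allocations, with optimal value $\min(\eta(k^\star), R_{p,k^\star+1})$ interpreted as $\eta(k^\star)$ when $k^\star = K$. -/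
import Mathlib

lemma card_filter_val_lt (K m : ℕ) (h : m ≤ K) :
    (Finset.univ.filter (fun j : Fin K => (j : ℕ) < m)).card = m := by
  rcases eq_or_lt_of_le h with rfl | h
  · rw [Finset.filter_true_of_mem (fun j _ => j.isLt)]
    simp
  · have : Finset.univ.filter (fun j : Fin K => (j : ℕ) < m) = Finset.Iio ⟨m, h⟩ := by
      ext j; simp [Fin.lt_def]
    rw [this, Fin.card_Iio]

open Finset in
/-- Closed-form optimal common-rate allocation for the MMF problem (Algorithm 3 /
Proposition 2): with sorted private rates and the water level
`η(k') = (Rc + ∑_{j≤k'} R_{p,j})/k'`, taking `k⋆` the largest feasible level index,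
the allocation `C_j = η(k⋆) - R_{p,j}` for `j ≤ k⋆`, `C_j = 0` otherwise, is feasible
and maximizes `min_k (C_k + R_{p,k})`, with optimal value
`min(η(k⋆), R_{p,k⋆+1})` (interpreted as `η(k⋆)` when `k⋆ = K`). -/
theorem stmt_3 (K : ℕ) (hK : 1 ≤ K) (Rc : ℝ) (hRc : 0 ≤ Rc)
    (Rp : Fin K → ℝ) (hmono : Monotone Rp) (kstar : ℕ)
    (η : ℕ → ℝ)
    (hη : ∀ k' : ℕ, η k' =
      (Rc + ∑ j ∈ Finset.univ.filter (fun j : Fin K => (j : ℕ) < k'), Rp j) / k')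
    (hks1 : 1 ≤ kstar) (hks2 : kstar ≤ K)
    (hfeas : ∀ j : Fin K, (j : ℕ) < kstar → Rp j ≤ η kstar)
    (hmax : ∀ k' : ℕ, kstar < k' → k' ≤ K → ∃ j : Fin K, (j : ℕ) < k' ∧ η k' < Rp j) :
    let C : Fin K → ℝ := fun j => if (j : ℕ) < kstar then η kstar - Rp j else 0
    let opt : ℝ := if h : kstar < K then min (η kstar) (Rp ⟨kstar, h⟩) else η kstar
    (∀ j, 0 ≤ C j) ∧ (∑ j, C j = Rc) ∧
      Finset.univ.inf' (Finset.univ_nonempty_iff.mpr ⟨⟨0, hK⟩⟩)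
          (fun k => C k + Rp k) = opt ∧
      (∀ C' : Fin K → ℝ, (∀ k, 0 ≤ C' k) → (∑ k, C' k = Rc) →
        Finset.univ.inf' (Finset.univ_nonempty_iff.mpr ⟨⟨0, hK⟩⟩)
            (fun k => C' k + Rp k) ≤ opt) := by
  intro C opt
  have hmul : ∀ m : ℕ, 1 ≤ m →
      (m : ℝ) * η m = Rc + ∑ j ∈ Finset.univ.filter (fun j : Fin K => (j : ℕ) < m), Rp j := by
    intro m hm
    rw [hη m]
    have : (m : ℝ) ≠ 0 := Nat.cast_ne_zero.mpr (by omega)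
    field_simp
  -- nonnegativity
  have hnonneg : ∀ j, 0 ≤ C j := by
    intro j
    simp only [C]
    split_ifs with h
    · linarith [hfeas j h]
    · exact le_rfl
  refine ⟨hnonneg, ?_, ?_, ?_⟩
  -- sum
  · have h1 : ∑ j, C j =
        ∑ j ∈ Finset.univ.filter (fun j : Fin K => (j : ℕ) < kstar), (η kstar - Rp j) := by
      rw [Finset.sum_filter]
    rw [h1, Finset.sum_sub_distrib, Finset.sum_const, card_filter_val_lt K kstar hks2,
      nsmul_eq_mul]
    have := hmul kstar hks1
    linarith
  -- inf' value
  · have hlb : ∀ k : Fin K, opt ≤ C k + Rp k := by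
      intro k
      by_cases h : (k : ℕ) < kstar
      · have : C k + Rp k = η kstar := by simp [C, h]
        rw [this]
        simp only [opt]
        split_ifs with h'
        · exact min_le_left _ _
        · exact le_rfl
      · have hkK : kstar < K := lt_of_le_of_lt (not_lt.mp h) k.isLt
        have : C k + Rp k = Rp k := by simp [C, h]
        rw [this]
        simp only [opt, dif_pos hkK]
        exact le_trans (min_le_right _ _) (hmono (by simp [Fin.le_def]; omega))
    apply le_antisymm _ (Finset.le_inf' _ _ (fun k _ => hlb k))
    have h0 : Finset.univ.inf' (Finset.univ_nonempty_iff.mpr ⟨⟨0, hK⟩⟩)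
        (fun k => C k + Rp k) ≤ η kstar := by
      have := Finset.inf'_le (fun k => C k + Rp k)
        (Finset.mem_univ (⟨0, by omega⟩ : Fin K))
      calc _ ≤ C ⟨0, by omega⟩ + Rp ⟨0, by omega⟩ := this
        _ = η kstar := by simp [C, show (0:ℕ) < kstar by omega]
    simp only [opt]
    split_ifs with h'
    · apply le_min h0
      have := Finset.inf'_le (fun k => C k + Rp k)
        (Finset.mem_univ (⟨kstar, h'⟩ : Fin K))
      calc _ ≤ C ⟨kstar, h'⟩ + Rp ⟨kstar, h'⟩ := this
        _ = Rp ⟨kstar, h'⟩ := by simp [C]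
    · exact h0
  -- optimality
  · intro C' hC'0 hC'sum
    set I := Finset.univ.inf' (Finset.univ_nonempty_iff.mpr ⟨⟨0, hK⟩⟩)
        (fun k => C' k + Rp k) with hI
    have key : ∀ m : ℕ, 1 ≤ m → m ≤ K → I ≤ η m := by
      intro m hm1 hm2
      set T := Finset.univ.filter (fun j : Fin K => (j : ℕ) < m) with hT
      have hTcard : T.card = m := card_filter_val_lt K m hm2
      have h1 : (m : ℝ) * I ≤ ∑ k ∈ T, (C' k + Rp k) := by
        have := Finset.card_nsmul_le_sum T (fun k => C' k + Rp k) I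
          (fun k _ => Finset.inf'_le _ (Finset.mem_univ k))
        rw [hTcard, nsmul_eq_mul] at this
        exact this
      have h2 : ∑ k ∈ T, C' k ≤ Rc := by
        rw [← hC'sum]
        exact Finset.sum_le_sum_of_subset_of_nonneg (Finset.subset_univ T)
          (fun k _ _ => hC'0 k)
      have h3 := hmul m hm1
      have hmpos : (0 : ℝ) < m := by exact_mod_cast (by omega : 0 < m)
      have h4 : ∑ k ∈ T, (C' k + Rp k) = ∑ k ∈ T, C' k + ∑ k ∈ T, Rp k :=
        Finset.sum_add_distrib
      have : (m : ℝ) * I ≤ (m : ℝ) * η m := by rw [h3]; linarith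
      exact le_of_mul_le_mul_left this hmpos
    simp only [opt]
    split_ifs with h'
    · apply le_min (key kstar hks1 hks2)
      obtain ⟨j, hj1, hj2⟩ := hmax (kstar + 1) (by omega) (by omega)
      have hjle : Rp j ≤ Rp ⟨kstar, h'⟩ := hmono (by simp [Fin.le_def]; omega)
      have := key (kstar + 1) (by omega) (by omega)
      linarith
    · exact key kstar hks1 hks2
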